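/- Utility bound for the Gaussian randomization mechanism: if 0 ≤ U_k(w) ≤ C_4 for all k and all w ∈ ℝ^n, then the utility loss satisfies ε_u := (1/K)·Σ_{k=1}^K (∫ U_k dP^O_a − ∫ U_k dP^S_a) ≤ (3/2)·C_4·min{1, σ_ε^2·√(Σ_{i=1}^n 1/σ_i^4)}. -/

import Mathlib

open MeasureTheory
open scoped ENNReal NNReal

/-- Density of the multivariate Gaussian `N(m, S)` on `ι → ℝ`. -/
noncomputable def gaussianPdf {ι : Type*} [Fintype ι] [DecidableEq ι]
    (m : ι → ℝ) (S : Matrix ι ι ℝ) (x : ι → ℝ) : ℝ :=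
  (Real.sqrt ((2 * Real.pi) ^ (Fintype.card ι) * S.det))⁻¹ *
    Real.exp (-(1 / 2) * dotProduct (x - m) (S⁻¹.mulVec (x - m)))

/-- The multivariate Gaussian probability measure `N(m, S)` on `ι → ℝ` with mean `m` and
covariance matrix `S`, defined via its density with respect to Lebesgue measure. -/
noncomputable def gaussianMeasure {ι : Type*} [Fintype ι] [DecidableEq ι]
    (m : ι → ℝ) (S : Matrix ι ι ℝ) : Measure (ι → ℝ) :=
  volume.withDensity fun x => ENNReal.ofReal (gaussianPdf m S x)

/-! ### One-dimensional Gaussian density lemmas -/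

noncomputable def g1 (c : ℝ) (y : ℝ) : ℝ :=
  (Real.sqrt (2 * Real.pi * c))⁻¹ * Real.exp (-(1 / (2 * c)) * y ^ 2)

lemma g1_nonneg (c y : ℝ) : 0 ≤ g1 c y := by unfold g1; positivity

lemma g1_continuous (c : ℝ) : Continuous (g1 c) := by unfold g1; fun_prop

lemma integrable_g1 {c : ℝ} (hc : 0 < c) : Integrable (g1 c) := by
  unfold g1
  exact (integrable_exp_neg_mul_sq (by positivity)).const_mul _

lemma integral_g1 {c : ℝ} (hc : 0 < c) : ∫ y, g1 c y = 1 := by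
  unfold g1
  rw [MeasureTheory.integral_const_mul, integral_gaussian]
  rw [show Real.pi / (1 / (2 * c)) = 2 * Real.pi * c by field_simp]
  rw [inv_mul_cancel₀ (by positivity)]

lemma sqrt_g1_mul_eq {a b : ℝ} (y : ℝ) :
    Real.sqrt (g1 a y * g1 b y) =
      (Real.sqrt (Real.sqrt (2 * Real.pi * a) * Real.sqrt (2 * Real.pi * b)))⁻¹ *
        Real.exp (-(1 / (4 * a) + 1 / (4 * b)) * y ^ 2) := by
  unfold g1
  rw [mul_mul_mul_comm, ← mul_inv, Real.sqrt_mul (by positivity), Real.sqrt_inv,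
    ← Real.exp_add, ← Real.exp_half]
  ring_nf

noncomputable def rho (a b : ℝ) : ℝ := Real.sqrt (2 * Real.sqrt (a * b) / (a + b))

lemma integrable_sqrt_g1_mul {a b : ℝ} (ha : 0 < a) (hb : 0 < b) :
    Integrable (fun y => Real.sqrt (g1 a y * g1 b y)) := by
  simp_rw [sqrt_g1_mul_eq]
  exact (integrable_exp_neg_mul_sq (by positivity)).const_mul _

lemma integral_sqrt_g1_mul {a b : ℝ} (ha : 0 < a) (hb : 0 < b) :
    ∫ y, Real.sqrt (g1 a y * g1 b y) = rho a b := by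
  simp_rw [sqrt_g1_mul_eq]
  rw [MeasureTheory.integral_const_mul, integral_gaussian]
  have hpi := Real.pi_pos
  have hab : Real.sqrt (a * b) > 0 := Real.sqrt_pos.2 (by positivity)
  have habsq : Real.sqrt (a * b) ^ 2 = a * b := Real.sq_sqrt (by positivity)
  have h2 : Real.sqrt (2 * Real.pi * a) * Real.sqrt (2 * Real.pi * b)
      = 2 * Real.pi * Real.sqrt (a * b) := by
    rw [← Real.sqrt_mul (by positivity),
      show 2 * Real.pi * a * (2 * Real.pi * b) = (2 * Real.pi) ^ 2 * (a * b) by ring,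
      Real.sqrt_mul (by positivity), Real.sqrt_sq (by positivity)]
  rw [h2]
  set V := (Real.sqrt (2 * Real.pi * Real.sqrt (a * b)))⁻¹ *
    Real.sqrt (Real.pi / (1 / (4 * a) + 1 / (4 * b))) with hV
  have hVnn : 0 ≤ V := by positivity
  have hVsq : V ^ 2 = 2 * Real.sqrt (a * b) / (a + b) := by
    rw [hV, mul_pow, ← Real.sqrt_inv, Real.sq_sqrt (by positivity),
      Real.sq_sqrt (by positivity)]
    rw [show Real.pi / (1 / (4 * a) + 1 / (4 * b)) = 4 * Real.pi * (a * b) / (a + b) by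
      field_simp; ring]
    rw [show 4 * Real.pi * (a * b) = 4 * Real.pi * Real.sqrt (a * b) ^ 2 by rw [habsq]]
    have hne : Real.sqrt (a * b) ≠ 0 := ne_of_gt hab
    field_simp
    ring
  rw [rho, ← hVsq, Real.sqrt_sq hVnn]

lemma rho_nonneg (a b : ℝ) : 0 ≤ rho a b := Real.sqrt_nonneg _

lemma rho_le_one {a b : ℝ} (ha : 0 < a) (hb : 0 < b) : rho a b ≤ 1 := by
  rw [rho]
  rw [Real.sqrt_le_one, div_le_one (by positivity)]
  nlinarith [Real.sq_sqrt ha.le, Real.sq_sqrt hb.le,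
    Real.sqrt_mul ha.le b, sq_nonneg (Real.sqrt a - Real.sqrt b)]

lemma one_sub_rho_le {a d : ℝ} (ha : 0 < a) (hd : 0 ≤ d) :
    1 - rho a (a + d) ≤ d ^ 2 / (8 * a ^ 2) := by
  set b := a + d with hbdef
  have hb : 0 < b := by positivity
  set sa := Real.sqrt a with hsa
  set sb := Real.sqrt b with hsb
  have hsa0 : 0 < sa := Real.sqrt_pos.2 ha
  have hsb0 : 0 < sb := Real.sqrt_pos.2 hb
  have e1 : sa ^ 2 = a := Real.sq_sqrt ha.le
  have e2 : sb ^ 2 = b := Real.sq_sqrt hb.le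
  have hsab : Real.sqrt (a * b) = sa * sb := Real.sqrt_mul ha.le b
  have hr : rho a b ^ 2 = 2 * (sa * sb) / (a + b) := by
    rw [rho, Real.sq_sqrt (by positivity), hsab]
  have hr0 : 0 ≤ rho a b := rho_nonneg a b
  have hr1 : rho a b ≤ 1 := rho_le_one ha hb
  have h1 : 1 - rho a b ≤ 1 - rho a b ^ 2 := by nlinarith
  have h2 : sb ≤ sa + d / (2 * sa) := by
    have hsq : b ≤ (sa + d / (2 * sa)) ^ 2 := by
      have : (sa + d / (2 * sa)) ^ 2 = a + d + d ^ 2 / (4 * a) := by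
        field_simp
        linear_combination (16 * a * sa ^ 2 - 4 * d ^ 2) * e1
      rw [this, hbdef]
      have : 0 ≤ d ^ 2 / (4 * a) := by positivity
      linarith
    calc sb = Real.sqrt b := rfl
      _ ≤ Real.sqrt ((sa + d / (2 * sa)) ^ 2) := Real.sqrt_le_sqrt hsq
      _ = sa + d / (2 * sa) := Real.sqrt_sq (by positivity)
  have h2' : 2 * sa * (sb - sa) ≤ d := by
    have := mul_le_mul_of_nonneg_left (sub_le_sub_right h2 sa) (by positivity : (0:ℝ) ≤ 2 * sa)
    calc 2 * sa * (sb - sa) ≤ 2 * sa * (sa + d / (2 * sa) - sa) := this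
      _ = d := by field_simp; ring
  have hdiff : 0 ≤ sb - sa := by
    have : sa ≤ sb := Real.sqrt_le_sqrt (by linarith)
    linarith
  have h3 : 4 * a * (sb - sa) ^ 2 ≤ d ^ 2 := by
    have := mul_self_le_mul_self (by positivity : (0:ℝ) ≤ 2 * sa * (sb - sa)) h2'
    nlinarith [e1]
  have h4 : 1 - rho a b ^ 2 ≤ d ^ 2 / (8 * a ^ 2) := by
    rw [hr, sub_div' (by positivity : a + b ≠ 0)]
    rw [div_le_div_iff₀ (by positivity) (by positivity)]
    have key : (a + b) * 1 - 2 * (sa * sb) = (sb - sa) ^ 2 := by nlinarith [e1, e2]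
    nlinarith [h3, sq_nonneg d, hd, ha]
  linarith

/-! ### Auxiliary finset lemmas -/

lemma sqrt_finset_prod {ι : Type*} (s : Finset ι) (f : ι → ℝ) (h : ∀ i ∈ s, 0 ≤ f i) :
    Real.sqrt (∏ i ∈ s, f i) = ∏ i ∈ s, Real.sqrt (f i) := by
  induction s using Finset.cons_induction with
  | empty => simp
  | cons a s ha ih =>
      rw [Finset.prod_cons, Finset.prod_cons,
        Real.sqrt_mul (h a (Finset.mem_cons_self a s)),
        ih (fun i hi => h i (Finset.mem_cons_of_mem hi))]

lemma one_sub_prod_le_sum {ι : Type*} (s : Finset ι) (f : ι → ℝ)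
    (h0 : ∀ i ∈ s, 0 ≤ f i) (h1 : ∀ i ∈ s, f i ≤ 1) :
    1 - ∏ i ∈ s, f i ≤ ∑ i ∈ s, (1 - f i) := by
  induction s using Finset.cons_induction with
  | empty => simp
  | cons a s ha ih =>
      rw [Finset.prod_cons, Finset.sum_cons]
      have hP0 : 0 ≤ ∏ i ∈ s, f i :=
        Finset.prod_nonneg fun i hi => h0 i (Finset.mem_cons_of_mem hi)
      have hP1 : ∏ i ∈ s, f i ≤ 1 :=
        Finset.prod_le_one (fun i hi => h0 i (Finset.mem_cons_of_mem hi))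
          (fun i hi => h1 i (Finset.mem_cons_of_mem hi))
      have ha0 : 0 ≤ f a := h0 a (Finset.mem_cons_self a s)
      have ha1 : f a ≤ 1 := h1 a (Finset.mem_cons_self a s)
      have := ih (fun i hi => h0 i (Finset.mem_cons_of_mem hi))
        (fun i hi => h1 i (Finset.mem_cons_of_mem hi))
      nlinarith

/-! ### The multivariate diagonal Gaussian density factorizes -/

lemma gaussianPdf_diagonal {n K : ℕ} (hK : 0 < K) (μ0 : Fin n → ℝ)
    (v : Fin n → ℝ) (hv : ∀ i, 0 < v i) (x : Fin n → ℝ) :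
    gaussianPdf μ0 ((K : ℝ)⁻¹ • Matrix.diagonal v) x
      = ∏ i, g1 (v i / K) (x i - μ0 i) := by
  have hKpos : (0:ℝ) < K := Nat.cast_pos.2 hK
  have hsmul : (K : ℝ)⁻¹ • Matrix.diagonal v = Matrix.diagonal (fun i => v i / K) := by
    ext i j
    rcases eq_or_ne i j with h | h
    · subst h
      simp [Matrix.smul_apply, Matrix.diagonal_apply_eq, div_eq_inv_mul]
    · simp [Matrix.smul_apply, Matrix.diagonal_apply_ne _ h]
  have hdet : ((K : ℝ)⁻¹ • Matrix.diagonal v).det = ∏ i, v i / K := by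
    rw [hsmul, Matrix.det_diagonal]
  have hinv : ((K : ℝ)⁻¹ • Matrix.diagonal v)⁻¹
      = Matrix.diagonal (fun i => (v i / K)⁻¹) := by
    rw [hsmul]
    apply Matrix.inv_eq_right_inv
    rw [Matrix.diagonal_mul_diagonal,
      show (fun i => v i / (K:ℝ) * (v i / K)⁻¹) = fun _ => (1:ℝ) from
        funext fun i => mul_inv_cancel₀ (by have := hv i; positivity),
      Matrix.diagonal_one]
  unfold gaussianPdf g1
  rw [hdet, hinv]
  have hexp : dotProduct (x - μ0)
      ((Matrix.diagonal fun i => (v i / K)⁻¹).mulVec (x - μ0))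
      = ∑ i, (x i - μ0 i) ^ 2 / (v i / K) := by
    unfold dotProduct
    refine Finset.sum_congr rfl fun i _ => ?_
    rw [Matrix.mulVec_diagonal]
    simp only [Pi.sub_apply]
    field_simp
  rw [hexp]
  rw [Finset.prod_mul_distrib, ← Real.exp_sum]
  have h1 : (Real.sqrt ((2 * Real.pi) ^ (Fintype.card (Fin n)) * ∏ i, v i / K))⁻¹
      = ∏ i, (Real.sqrt (2 * Real.pi * (v i / K)))⁻¹ := by
    rw [show (2 * Real.pi) ^ (Fintype.card (Fin n)) * ∏ i, v i / (K:ℝ)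
        = ∏ i, (2 * Real.pi * (v i / K)) by
      rw [Finset.prod_mul_distrib, Finset.prod_const, Finset.card_univ]]
    rw [sqrt_finset_prod _ _
      (fun i _ => mul_nonneg (by positivity) (div_nonneg (hv i).le hKpos.le)),
      ← Finset.prod_inv_distrib]
  rw [h1]
  congr 1
  congr 1
  rw [Finset.mul_sum]
  refine Finset.sum_congr rfl fun i _ => ?_
  have := (hv i).ne'
  field_simp

/-! ### Integration against the diagonal Gaussian measure -/

lemma integral_gaussianMeasure_diagonal {n K : ℕ} (hK : 0 < K) (μ0 : Fin n → ℝ)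
    (v : Fin n → ℝ) (hv : ∀ i, 0 < v i) (f : (Fin n → ℝ) → ℝ) :
    ∫ w, f w ∂(gaussianMeasure μ0 ((K : ℝ)⁻¹ • Matrix.diagonal v))
      = ∫ x, (∏ i, g1 (v i / K) (x i - μ0 i)) * f x := by
  have hKpos : (0:ℝ) < K := Nat.cast_pos.2 hK
  have hpdf : (fun x => ENNReal.ofReal (gaussianPdf μ0 ((K : ℝ)⁻¹ • Matrix.diagonal v) x))
      = fun x => ((Real.toNNReal (∏ i, g1 (v i / K) (x i - μ0 i)) : ℝ≥0) : ℝ≥0∞) := by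
    funext x
    rw [gaussianPdf_diagonal hK μ0 v hv x]
    rfl
  have hcont : Continuous fun x : Fin n → ℝ => ∏ i, g1 (v i / K) (x i - μ0 i) :=
    continuous_finset_prod _ fun i _ =>
      (g1_continuous _).comp ((continuous_apply i).sub continuous_const)
  rw [gaussianMeasure, hpdf,
    integral_withDensity_eq_integral_smul hcont.measurable.real_toNNReal f]
  refine integral_congr_ae (Filter.Eventually.of_forall fun x => ?_)
  have hnn : 0 ≤ ∏ i, g1 (v i / K) (x i - μ0 i) :=
    Finset.prod_nonneg fun i _ => g1_nonneg _ _
  simp [NNReal.smul_def, Real.coe_toNNReal _ hnn]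

set_option maxHeartbeats 2000000 in
theorem randomization_utility_bound
    (n K : ℕ) (hK : 0 < K)
    (μ0 : Fin n → ℝ) (σ : Fin n → ℝ) (hσ : ∀ i, 0 < σ i)
    (σε : ℝ) (hσε : 0 < σε)
    (U : Fin K → (Fin n → ℝ) → ℝ)
    (hU_meas : ∀ k, Measurable (U k))
    (C4 : ℝ) (hC4 : 0 ≤ C4)
    (hU_bdd : ∀ k w, 0 ≤ U k w ∧ U k w ≤ C4) :
    (1 / (K : ℝ)) * ∑ k,
        ((∫ w, U k w ∂(gaussianMeasure μ0 ((K : ℝ)⁻¹ • Matrix.diagonal fun i => σ i ^ 2)))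
          - ∫ w, U k w
              ∂(gaussianMeasure μ0 ((K : ℝ)⁻¹ • Matrix.diagonal fun i => σ i ^ 2 + σε ^ 2)))
      ≤ (3 / 2) * C4 * min 1 (σε ^ 2 * Real.sqrt (∑ i, 1 / σ i ^ 4)) := by
  classical
  have hKpos : (0:ℝ) < K := Nat.cast_pos.2 hK
  set s : ℝ := σε ^ 2 * Real.sqrt (∑ i, 1 / σ i ^ 4) with hs_def
  have hs0 : 0 ≤ s := by positivity
  -- densities
  set p : (Fin n → ℝ) → ℝ := fun x => ∏ i, g1 (σ i ^ 2 / K) (x i - μ0 i) with hp_def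
  set q : (Fin n → ℝ) → ℝ := fun x => ∏ i, g1 ((σ i ^ 2 + σε ^ 2) / K) (x i - μ0 i) with hq_def
  have hva0 : ∀ i : Fin n, (0:ℝ) < σ i ^ 2 := fun i => by have := hσ i; positivity
  have hvb0 : ∀ i : Fin n, (0:ℝ) < σ i ^ 2 + σε ^ 2 := fun i => by have := hσ i; positivity
  have hc1 : ∀ i : Fin n, (0:ℝ) < σ i ^ 2 / K := fun i => div_pos (hva0 i) hKpos
  have hc2 : ∀ i : Fin n, (0:ℝ) < (σ i ^ 2 + σε ^ 2) / K := fun i => div_pos (hvb0 i) hKpos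
  have hp0 : ∀ x, 0 ≤ p x := fun x => Finset.prod_nonneg fun i _ => g1_nonneg _ _
  have hq0 : ∀ x, 0 ≤ q x := fun x => Finset.prod_nonneg fun i _ => g1_nonneg _ _
  have hpc : Continuous p := continuous_finset_prod _ fun i _ =>
    (g1_continuous _).comp ((continuous_apply i).sub continuous_const)
  have hqc : Continuous q := continuous_finset_prod _ fun i _ =>
    (g1_continuous _).comp ((continuous_apply i).sub continuous_const)
  -- rewrite the integrals over the gaussian measures
  have hrwP : ∀ k, (∫ w, U k w
      ∂(gaussianMeasure μ0 ((K : ℝ)⁻¹ • Matrix.diagonal fun i => σ i ^ 2)))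
      = ∫ x, p x * U k x := fun k =>
    integral_gaussianMeasure_diagonal hK μ0 (fun i => σ i ^ 2) hva0 (U k)
  have hrwQ : ∀ k, (∫ w, U k w
      ∂(gaussianMeasure μ0 ((K : ℝ)⁻¹ • Matrix.diagonal fun i => σ i ^ 2 + σε ^ 2)))
      = ∫ x, q x * U k x := fun k =>
    integral_gaussianMeasure_diagonal hK μ0 (fun i => σ i ^ 2 + σε ^ 2) hvb0 (U k)
  -- integrability and total mass
  have hpInt : Integrable p :=
    Integrable.fintype_prod (f := fun i y => g1 (σ i ^ 2 / K) (y - μ0 i))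
      (fun i => (integrable_g1 (hc1 i)).comp_sub_right (μ0 i))
  have hqInt : Integrable q :=
    Integrable.fintype_prod (f := fun i y => g1 ((σ i ^ 2 + σε ^ 2) / K) (y - μ0 i))
      (fun i => (integrable_g1 (hc2 i)).comp_sub_right (μ0 i))
  have hpOne : ∫ x, p x = 1 := by
    rw [hp_def,
      MeasureTheory.integral_fintype_prod_volume_eq_prod (ι := Fin n)
        (f := fun i y => g1 (σ i ^ 2 / K) (y - μ0 i))]
    refine Finset.prod_eq_one fun i _ => ?_
    rw [integral_sub_right_eq_self (g1 (σ i ^ 2 / K)) (μ0 i)]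
    exact integral_g1 (hc1 i)
  have hqOne : ∫ x, q x = 1 := by
    rw [hq_def,
      MeasureTheory.integral_fintype_prod_volume_eq_prod (ι := Fin n)
        (f := fun i y => g1 ((σ i ^ 2 + σε ^ 2) / K) (y - μ0 i))]
    refine Finset.prod_eq_one fun i _ => ?_
    rw [integral_sub_right_eq_self (g1 ((σ i ^ 2 + σε ^ 2) / K)) (μ0 i)]
    exact integral_g1 (hc2 i)
  -- the Hellinger affinity
  set r : (Fin n → ℝ) → ℝ := fun x => Real.sqrt (p x * q x) with hr_def
  have hr_eq : ∀ x, r x = ∏ i,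
      Real.sqrt (g1 (σ i ^ 2 / K) (x i - μ0 i) * g1 ((σ i ^ 2 + σε ^ 2) / K) (x i - μ0 i)) := by
    intro x
    show Real.sqrt (p x * q x) = _
    rw [show p x * q x = ∏ i, (g1 (σ i ^ 2 / (K:ℝ)) (x i - μ0 i)
        * g1 ((σ i ^ 2 + σε ^ 2) / (K:ℝ)) (x i - μ0 i)) from Finset.prod_mul_distrib.symm]
    exact sqrt_finset_prod _ _ (fun i _ => mul_nonneg (g1_nonneg _ _) (g1_nonneg _ _))
  have hrInt : Integrable r := by
    refine (Integrable.fintype_prod (f := fun i y =>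
      Real.sqrt (g1 (σ i ^ 2 / K) (y - μ0 i) * g1 ((σ i ^ 2 + σε ^ 2) / K) (y - μ0 i)))
      (fun i => (integrable_sqrt_g1_mul (hc1 i) (hc2 i)).comp_sub_right (μ0 i))).congr ?_
    exact Filter.Eventually.of_forall fun x => (hr_eq x).symm
  set R : ℝ := ∏ i, rho (σ i ^ 2 / K) ((σ i ^ 2 + σε ^ 2) / K) with hR_def
  have hrIntEq : ∫ x, r x = R := by
    rw [show (fun x => r x) = fun x : Fin n → ℝ => ∏ i,
        Real.sqrt (g1 (σ i ^ 2 / K) (x i - μ0 i) * g1 ((σ i ^ 2 + σε ^ 2) / K) (x i - μ0 i))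
      from funext hr_eq]
    rw [MeasureTheory.integral_fintype_prod_volume_eq_prod (ι := Fin n)
      (f := fun i y => Real.sqrt (g1 (σ i ^ 2 / K) (y - μ0 i)
        * g1 ((σ i ^ 2 + σε ^ 2) / K) (y - μ0 i)))]
    refine Finset.prod_congr rfl fun i _ => ?_
    rw [integral_sub_right_eq_self
      (fun y => Real.sqrt (g1 (σ i ^ 2 / K) y * g1 ((σ i ^ 2 + σε ^ 2) / K) y)) (μ0 i)]
    exact integral_sqrt_g1_mul (hc1 i) (hc2 i)
  have hR0 : 0 ≤ R := Finset.prod_nonneg fun i _ => rho_nonneg _ _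
  have hR1 : R ≤ 1 := Finset.prod_le_one (fun i _ => rho_nonneg _ _)
    (fun i _ => rho_le_one (hc1 i) (hc2 i))
  -- 1 - R ≤ s^2/8
  have hRbound : 1 - R ≤ s ^ 2 / 8 := by
    have h1 : 1 - R ≤ ∑ i, (1 - rho (σ i ^ 2 / K) ((σ i ^ 2 + σε ^ 2) / K)) :=
      one_sub_prod_le_sum _ _ (fun i _ => rho_nonneg _ _)
        (fun i _ => rho_le_one (hc1 i) (hc2 i))
    have h2 : ∀ i : Fin n, 1 - rho (σ i ^ 2 / K) ((σ i ^ 2 + σε ^ 2) / K)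
        ≤ σε ^ 4 / (8 * σ i ^ 4) := by
      intro i
      have heq : (σ i ^ 2 + σε ^ 2) / (K:ℝ) = σ i ^ 2 / K + σε ^ 2 / K := by ring
      have := one_sub_rho_le (hc1 i) (le_of_lt (div_pos (by positivity) hKpos) :
        (0:ℝ) ≤ σε ^ 2 / K)
      rw [← heq] at this
      refine this.trans (le_of_eq ?_)
      have h4 : σ i ≠ 0 := (hσ i).ne'
      field_simp
    have h3 : ∑ i, σε ^ 4 / (8 * σ i ^ 4) = σε ^ 4 / 8 * ∑ i, 1 / σ i ^ 4 := by
      rw [Finset.mul_sum]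
      refine Finset.sum_congr rfl fun i _ => ?_
      field_simp
    have h4 : s ^ 2 = σε ^ 4 * ∑ i, 1 / σ i ^ 4 := by
      rw [hs_def, mul_pow, Real.sq_sqrt (by positivity)]
      ring
    calc 1 - R ≤ ∑ i, (1 - rho (σ i ^ 2 / K) ((σ i ^ 2 + σε ^ 2) / K)) := h1
      _ ≤ ∑ i, σε ^ 4 / (8 * σ i ^ 4) := Finset.sum_le_sum fun i _ => h2 i
      _ = σε ^ 4 / 8 * ∑ i, 1 / σ i ^ 4 := h3
      _ = s ^ 2 / 8 := by rw [h4]; ring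
  -- total variation bound via Cauchy-Schwarz
  set sp : (Fin n → ℝ) → ℝ := fun x => Real.sqrt (p x) with hsp_def
  set sq' : (Fin n → ℝ) → ℝ := fun x => Real.sqrt (q x) with hsq_def
  have hspc : Continuous sp := Real.continuous_sqrt.comp hpc
  have hsqc : Continuous sq' := Real.continuous_sqrt.comp hqc
  have hsp0 : ∀ x, 0 ≤ sp x := fun x => Real.sqrt_nonneg _
  have hsq0 : ∀ x, 0 ≤ sq' x := fun x => Real.sqrt_nonneg _
  have hspsq : ∀ x, sp x * sq' x = r x := fun x =>
    (Real.sqrt_mul (hp0 x) (q x)).symm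
  have hsp2 : ∀ x, sp x ^ 2 = p x := fun x => Real.sq_sqrt (hp0 x)
  have hsq2 : ∀ x, sq' x ^ 2 = q x := fun x => Real.sq_sqrt (hq0 x)
  have id1 : ∀ x, |sp x - sq' x| ^ 2 = p x + q x - 2 * r x := by
    intro x
    rw [sq_abs]
    have := hsp2 x; have := hsq2 x; have := hspsq x
    nlinarith [this]
  have id2 : ∀ x, (sp x + sq' x) ^ 2 = p x + q x + 2 * r x := by
    intro x
    have := hsp2 x; have := hsq2 x; have := hspsq x
    nlinarith [this]
  have id3 : ∀ x, |p x - q x| = |sp x - sq' x| * (sp x + sq' x) := by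
    intro x
    rw [← abs_of_nonneg (add_nonneg (hsp0 x) (hsq0 x)), ← abs_mul]
    congr 1
    rw [← hsp2 x, ← hsq2 x]
    ring
  have hfsq : Integrable (fun x => |sp x - sq' x| ^ 2) := by
    refine ((hpInt.add hqInt).sub (hrInt.const_mul 2)).congr ?_
    exact Filter.Eventually.of_forall fun x => (id1 x).symm
  have hgsq : Integrable (fun x => (sp x + sq' x) ^ 2) := by
    refine ((hpInt.add hqInt).add (hrInt.const_mul 2)).congr ?_
    exact Filter.Eventually.of_forall fun x => (id2 x).symm
  have hofReal2 : ENNReal.ofReal (2:ℝ) = 2 := by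
    rw [show (2:ℝ) = ((2:ℕ):ℝ) by norm_num, ENNReal.ofReal_natCast]
    norm_num
  have hf_mem : MemLp (fun x => |sp x - sq' x|) (ENNReal.ofReal 2) volume := by
    rw [hofReal2]
    exact (memLp_two_iff_integrable_sq
      ((hspc.sub hsqc).abs.aestronglyMeasurable)).2 hfsq
  have hg_mem : MemLp (fun x => sp x + sq' x) (ENNReal.ofReal 2) volume := by
    rw [hofReal2]
    exact (memLp_two_iff_integrable_sq
      ((hspc.add hsqc).aestronglyMeasurable)).2 hgsq
  have hconj : Real.HolderConjugate 2 2 := Real.HolderConjugate.two_two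
  have hHolder := MeasureTheory.integral_mul_le_Lp_mul_Lq_of_nonneg hconj
    (Filter.Eventually.of_forall fun x => abs_nonneg _)
    (Filter.Eventually.of_forall fun x => add_nonneg (hsp0 x) (hsq0 x)) hf_mem hg_mem
  simp only [show ∀ x : ℝ, x ^ (2:ℝ) = x ^ 2 from fun x => by
    rw [show (2:ℝ) = ((2:ℕ):ℝ) by norm_num, Real.rpow_natCast]] at hHolder
  have hIntF : ∫ x, |sp x - sq' x| ^ 2 = 2 - 2 * R := by
    rw [show (fun x => |sp x - sq' x| ^ 2) = fun x => p x + q x - 2 * r x from funext id1]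
    have e1 : ∫ x, (p x + q x - 2 * r x) = (∫ x, (p x + q x)) - ∫ x, 2 * r x :=
      MeasureTheory.integral_sub (hpInt.add hqInt) (hrInt.const_mul 2)
    have e2 : ∫ x, (p x + q x) = (∫ x, p x) + ∫ x, q x :=
      MeasureTheory.integral_add hpInt hqInt
    have e3 : ∫ x, 2 * r x = 2 * ∫ x, r x := MeasureTheory.integral_const_mul 2 r
    rw [e1, e2, e3, hpOne, hqOne, hrIntEq]
    ring
  have hIntG : ∫ x, (sp x + sq' x) ^ 2 = 2 + 2 * R := by
    rw [show (fun x => (sp x + sq' x) ^ 2) = fun x => p x + q x + 2 * r x from funext id2]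
    have e1 : ∫ x, (p x + q x + 2 * r x) = (∫ x, (p x + q x)) + ∫ x, 2 * r x :=
      MeasureTheory.integral_add (hpInt.add hqInt) (hrInt.const_mul 2)
    have e2 : ∫ x, (p x + q x) = (∫ x, p x) + ∫ x, q x :=
      MeasureTheory.integral_add hpInt hqInt
    have e3 : ∫ x, 2 * r x = 2 * ∫ x, r x := MeasureTheory.integral_const_mul 2 r
    rw [e1, e2, e3, hpOne, hqOne, hrIntEq]
    ring
  rw [hIntF, hIntG] at hHolder
  -- the TV bound
  have htv : ∫ x, |p x - q x| ≤ s := by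
    have e0 : ∫ x, |p x - q x| = ∫ x, |sp x - sq' x| * (sp x + sq' x) := by
      exact integral_congr_ae (Filter.Eventually.of_forall fun x => id3 x)
    have e1 : (2 - 2 * R) ^ ((1:ℝ)/2) = Real.sqrt (2 - 2 * R) :=
      (Real.sqrt_eq_rpow _).symm
    have e2 : (2 + 2 * R) ^ ((1:ℝ)/2) = Real.sqrt (2 + 2 * R) :=
      (Real.sqrt_eq_rpow _).symm
    rw [e0]
    refine hHolder.trans ?_
    rw [e1, e2]
    have b1 : Real.sqrt (2 - 2 * R) ≤ s / 2 := by
      have h22 : 2 - 2 * R ≤ s ^ 2 / 4 := by nlinarith [hRbound]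
      calc Real.sqrt (2 - 2 * R) ≤ Real.sqrt (s ^ 2 / 4) := Real.sqrt_le_sqrt h22
        _ = Real.sqrt ((s / 2) ^ 2) := by congr 1; ring
        _ = s / 2 := Real.sqrt_sq (by positivity)
    have b2 : Real.sqrt (2 + 2 * R) ≤ 2 := by
      have : (2:ℝ) + 2 * R ≤ 4 := by nlinarith
      calc Real.sqrt (2 + 2 * R) ≤ Real.sqrt 4 := Real.sqrt_le_sqrt this
        _ = 2 := by rw [show (4:ℝ) = 2 ^ 2 by norm_num, Real.sqrt_sq (by norm_num)]
    calc Real.sqrt (2 - 2 * R) * Real.sqrt (2 + 2 * R)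
        ≤ (s / 2) * 2 := by
          exact mul_le_mul b1 b2 (Real.sqrt_nonneg _) (by positivity)
      _ = s := by ring
  -- per-k bound
  have hkey : ∀ k : Fin K, (∫ x, p x * U k x) - (∫ x, q x * U k x)
      ≤ (3/2) * C4 * min 1 s := by
    intro k
    have hUb : ∀ x, ‖U k x‖ ≤ C4 := fun x => by
      rw [Real.norm_eq_abs, abs_of_nonneg (hU_bdd k x).1]; exact (hU_bdd k x).2
    have hIntPU : Integrable (fun x => p x * U k x) := by
      have := hpInt.bdd_mul (hU_meas k).aestronglyMeasurable (Filter.Eventually.of_forall hUb)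
      refine this.congr (Filter.Eventually.of_forall fun x => ?_)
      simp [mul_comm]
    have hIntQU : Integrable (fun x => q x * U k x) := by
      have := hqInt.bdd_mul (hU_meas k).aestronglyMeasurable (Filter.Eventually.of_forall hUb)
      refine this.congr (Filter.Eventually.of_forall fun x => ?_)
      simp [mul_comm]
    -- bound 1 : diff ≤ C4
    have hb1 : (∫ x, p x * U k x) - (∫ x, q x * U k x) ≤ C4 := by
      have h1 : (∫ x, q x * U k x) ≥ 0 :=
        integral_nonneg fun x => mul_nonneg (hq0 x) (hU_bdd k x).1
      have h2 : (∫ x, p x * U k x) ≤ C4 := by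
        calc (∫ x, p x * U k x) ≤ ∫ x, p x * C4 := by
              refine integral_mono hIntPU (hpInt.mul_const C4) fun x => ?_
              exact mul_le_mul_of_nonneg_left (hU_bdd k x).2 (hp0 x)
          _ = C4 := by rw [MeasureTheory.integral_mul_const, hpOne, one_mul]
      linarith
    -- bound 2 : diff ≤ (C4/2) * s
    have hb2 : (∫ x, p x * U k x) - (∫ x, q x * U k x) ≤ C4 / 2 * s := by
      rw [← MeasureTheory.integral_sub hIntPU hIntQU]
      have hptw : ∀ x, p x * U k x - q x * U k x
          ≤ C4 / 2 * (|p x - q x| + (p x - q x)) := by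
        intro x
        rcases abs_cases (p x - q x) with ⟨h1, h2⟩ | ⟨h1, h2⟩
        · rw [h1]
          nlinarith [(hU_bdd k x).1, (hU_bdd k x).2, h2]
        · rw [h1]
          nlinarith [(hU_bdd k x).1, (hU_bdd k x).2, h2]
      have hIntRHS : Integrable (fun x => C4 / 2 * (|p x - q x| + (p x - q x))) :=
        (((hpInt.sub hqInt).abs.add (hpInt.sub hqInt))).const_mul (C4 / 2)
      calc ∫ x, (p x * U k x - q x * U k x)
          ≤ ∫ x, C4 / 2 * (|p x - q x| + (p x - q x)) :=
            integral_mono (hIntPU.sub hIntQU) hIntRHS hptw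
        _ = C4 / 2 * ((∫ x, |p x - q x|) + ((∫ x, p x) - ∫ x, q x)) := by
            have e1 : ∫ x, C4 / 2 * (|p x - q x| + (p x - q x))
                = C4 / 2 * ∫ x, (|p x - q x| + (p x - q x)) :=
              MeasureTheory.integral_const_mul _ _
            have e2 : ∫ x, (|p x - q x| + (p x - q x))
                = (∫ x, |p x - q x|) + ∫ x, (p x - q x) :=
              MeasureTheory.integral_add (hpInt.sub hqInt).abs (hpInt.sub hqInt)
            have e3 : ∫ x, (p x - q x) = (∫ x, p x) - ∫ x, q x :=
              MeasureTheory.integral_sub hpInt hqInt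
            rw [e1, e2, e3]
        _ = C4 / 2 * ∫ x, |p x - q x| := by rw [hpOne, hqOne]; ring_nf
        _ ≤ C4 / 2 * s := by
            exact mul_le_mul_of_nonneg_left htv (by positivity)
    rcases le_total s 1 with hcase | hcase
    · rw [min_eq_right hcase]
      nlinarith
    · rw [min_eq_left hcase]
      nlinarith
  -- sum up
  have hsum : ∑ k, ((∫ w, U k w
      ∂(gaussianMeasure μ0 ((K : ℝ)⁻¹ • Matrix.diagonal fun i => σ i ^ 2)))
      - ∫ w, U k w
          ∂(gaussianMeasure μ0 ((K : ℝ)⁻¹ • Matrix.diagonal fun i => σ i ^ 2 + σε ^ 2)))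
      ≤ (K : ℝ) * ((3/2) * C4 * min 1 s) := by
    calc ∑ k, ((∫ w, U k w
        ∂(gaussianMeasure μ0 ((K : ℝ)⁻¹ • Matrix.diagonal fun i => σ i ^ 2)))
        - ∫ w, U k w
            ∂(gaussianMeasure μ0 ((K : ℝ)⁻¹ • Matrix.diagonal fun i => σ i ^ 2 + σε ^ 2)))
        ≤ ∑ _k : Fin K, (3/2) * C4 * min 1 s := by
          refine Finset.sum_le_sum fun k _ => ?_
          rw [hrwP k, hrwQ k]
          exact hkey k
      _ = (K : ℝ) * ((3/2) * C4 * min 1 s) := by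
          rw [Finset.sum_const, Finset.card_univ, Fintype.card_fin, nsmul_eq_mul]
  calc (1 / (K : ℝ)) * ∑ k, ((∫ w, U k w
      ∂(gaussianMeasure μ0 ((K : ℝ)⁻¹ • Matrix.diagonal fun i => σ i ^ 2)))
      - ∫ w, U k w
          ∂(gaussianMeasure μ0 ((K : ℝ)⁻¹ • Matrix.diagonal fun i => σ i ^ 2 + σε ^ 2)))
      ≤ (1 / (K : ℝ)) * ((K : ℝ) * ((3/2) * C4 * min 1 s)) := by
        exact mul_le_mul_of_nonneg_left hsum (by positivity)
    _ = (3/2) * C4 * min 1 s := by field_simp
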